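/- Let X be a finite nonempty subset of the unit sphere S³ ⊂ ℝ⁴ such that A(X) ⊆ [−1/2, 1/2]. Then |X| ≤ 12. Moreover, |X| = 12 holds if and only if X is a spherical {10,4,2}-design and A(X) ⊆ {−1/2, 0, 1/2}. -/

import Mathlib

noncomputable section

/-- Standard Euclidean inner product on `ℝ^d`. -/
def dotp {d : ℕ} (x y : Fin d → ℝ) : ℝ := ∑ i, x i * y i

/-- A polynomial in `d` real variables is harmonic if its Laplacian vanishes. -/
def IsHarmonic {d : ℕ} (P : MvPolynomial (Fin d) ℝ) : Prop :=
  ∑ i, MvPolynomial.pderiv i (MvPolynomial.pderiv i P) = 0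

/-- `X ⊆ S^{d-1}` is a spherical design of harmonic index `T`:
for every `ℓ ∈ T` and every homogeneous harmonic polynomial `P` of degree `ℓ`,
the sum of `P` over `X` vanishes. -/
def IsSphDesign {d : ℕ} (T : Set ℕ) (X : Set (Fin d → ℝ)) : Prop :=
  ∀ ℓ ∈ T, ∀ P : MvPolynomial (Fin d) ℝ, P.IsHomogeneous ℓ → IsHarmonic P →
    ∑ᶠ x ∈ X, MvPolynomial.eval x P = 0

open MvPolynomial Finsupp
namespace SphAux

abbrev MvP := MvPolynomial (Fin 4) ℝ

/-- weight: product of factorials of exponents -/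
def w (α : Fin 4 →₀ ℕ) : ℝ := ∏ i, ((α i).factorial : ℝ)

lemma w_pos (α : Fin 4 →₀ ℕ) : 0 < w α := by
  refine Finset.prod_pos fun i _ => ?_
  exact_mod_cast Nat.factorial_pos (α i)

lemma w_zero : w 0 = 1 := by simp [w]

lemma w_add_single (β : Fin 4 →₀ ℕ) (i : Fin 4) :
    w (β + Finsupp.single i 1) = w β * (β i + 1) := by
  classical
  rw [w, w, ← Finset.prod_erase_mul _ _ (Finset.mem_univ i),
    ← Finset.prod_erase_mul _ _ (Finset.mem_univ i)]
  have h1 : ∀ j ∈ Finset.univ.erase i,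
      ((((β + Finsupp.single i 1) : Fin 4 →₀ ℕ) j).factorial : ℝ) = ((β j).factorial : ℝ) := by
    intro j hj
    rw [Finsupp.add_apply, Finsupp.single_apply, if_neg (Finset.ne_of_mem_erase hj).symm]
    simp
  rw [Finset.prod_congr rfl h1]
  have h2 : ((β + Finsupp.single i 1) : Fin 4 →₀ ℕ) i = β i + 1 := by simp
  rw [h2, Nat.factorial_succ]
  push_cast; ring

/-- The Fischer bilinear form on coefficients. -/
def B (P Q : MvP) : ℝ := ∑ α ∈ P.support, w α * P.coeff α * Q.coeff α

lemma B_comm (P Q : MvP) : B P Q = B Q P := by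
  rw [B, B]
  rw [Finset.sum_subset (Finset.subset_union_left (s₂ := Q.support))
    (fun α _ hα => by rw [MvPolynomial.notMem_support_iff.mp hα]; ring)]
  conv_rhs => rw [Finset.sum_subset (Finset.subset_union_right (s₁ := P.support))
    (fun α _ hα => by rw [MvPolynomial.notMem_support_iff.mp hα]; ring)]
  exact Finset.sum_congr rfl fun α _ => by ring

lemma B_add_right (P Q₁ Q₂ : MvP) : B P (Q₁ + Q₂) = B P Q₁ + B P Q₂ := by
  rw [B, B, B, ← Finset.sum_add_distrib]
  exact Finset.sum_congr rfl fun α _ => by rw [coeff_add]; ring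

lemma B_add_left (P₁ P₂ Q : MvP) : B (P₁ + P₂) Q = B P₁ Q + B P₂ Q := by
  rw [B_comm, B_add_right, B_comm Q, B_comm Q]

lemma B_zero_right (P : MvP) : B P 0 = 0 := by simp [B]

lemma B_zero_left (Q : MvP) : B 0 Q = 0 := by rw [B_comm, B_zero_right]

lemma B_sum_right {ι : Type*} (s : Finset ι) (P : MvP) (f : ι → MvP) :
    B P (∑ i ∈ s, f i) = ∑ i ∈ s, B P (f i) := by
  classical
  induction s using Finset.induction_on with
  | empty => simp [B_zero_right]
  | insert _ _ h ih => rw [Finset.sum_insert h, Finset.sum_insert h, B_add_right, ih]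

lemma B_sum_left {ι : Type*} (s : Finset ι) (f : ι → MvP) (Q : MvP) :
    B (∑ i ∈ s, f i) Q = ∑ i ∈ s, B (f i) Q := by
  rw [B_comm, B_sum_right]
  exact Finset.sum_congr rfl fun i _ => B_comm _ _

lemma B_C_mul_right (c : ℝ) (P Q : MvP) : B P (C c * Q) = c * B P Q := by
  rw [B, B, Finset.mul_sum]
  exact Finset.sum_congr rfl fun α _ => by rw [coeff_C_mul]; ring

lemma B_self_nonneg (P : MvP) : 0 ≤ B P P :=
  Finset.sum_nonneg fun α _ => by
    have := w_pos α; nlinarith [sq_nonneg (P.coeff α)]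

lemma eq_zero_of_B_self (P : MvP) (h : B P P = 0) : P = 0 := by
  have hterm : ∀ α ∈ P.support, w α * P.coeff α * P.coeff α = 0 := by
    refine (Finset.sum_eq_zero_iff_of_nonneg fun α _ => ?_).mp h
    have := w_pos α; nlinarith [sq_nonneg (P.coeff α)]
  ext α
  rcases em (α ∈ P.support) with hα | hα
  · have := hterm α hα
    have hw := w_pos α
    have : P.coeff α * P.coeff α = 0 := by
      rcases mul_eq_zero.mp this with h' | h'
      · rcases mul_eq_zero.mp h' with h'' | h''
        · exact absurd h'' (ne_of_gt hw)
        · rw [h'']; ring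
      · rw [h']; ring
    simpa [coeff_zero] using mul_self_eq_zero.mp this
  · simpa [coeff_zero] using MvPolynomial.notMem_support_iff.mp hα

lemma B_monomial_monomial (α β : Fin 4 →₀ ℕ) (a b : ℝ) :
    B (monomial α a) (monomial β b) = if α = β then w α * a * b else 0 := by
  classical
  rcases em (a = 0) with rfl | ha
  · simp [B]
  · rw [B, support_monomial, if_neg ha, Finset.sum_singleton,
      coeff_monomial, coeff_monomial, if_pos rfl]
    rcases em (α = β) with h | h
    · rw [if_pos h, if_pos h.symm, h]
    · rw [if_neg h, if_neg (fun hh => h hh.symm)]; ring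


lemma sub_single_add (γ : Fin 4 →₀ ℕ) (i : Fin 4) (h : γ i ≠ 0) :
    γ - Finsupp.single i 1 + Finsupp.single i 1 = γ := by
  ext j
  simp only [Finsupp.add_apply, Finsupp.tsub_apply, Finsupp.single_apply]
  split_ifs with hij
  · subst hij; omega
  · omega

lemma B_mono_X (γ β : Fin 4 →₀ ℕ) (a b : ℝ) (i : Fin 4) :
    B (monomial γ a) (X i * monomial β b) = B (pderiv i (monomial γ a)) (monomial β b) := by
  classical
  rw [X, monomial_mul, one_mul, pderiv_monomial, B_monomial_monomial, B_monomial_monomial]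
  rcases em (γ i = 0) with h0 | h0
  · have hne1 : γ ≠ Finsupp.single i 1 + β := by
      intro hγ
      have : γ i = (Finsupp.single i 1 + β : Fin 4 →₀ ℕ) i := by rw [hγ]
      rw [Finsupp.add_apply, Finsupp.single_eq_same] at this
      omega
    rw [if_neg hne1, h0]
    push_cast
    split_ifs <;> ring
  · rcases em (γ = Finsupp.single i 1 + β) with heq | hne
    · have hβ : γ - Finsupp.single i 1 = β := by
        rw [heq]; ext j; simp only [Finsupp.tsub_apply, Finsupp.add_apply]; omega
      rw [if_pos heq, if_pos hβ, hβ]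
      have hγi : γ i = β i + 1 := by
        rw [heq, Finsupp.add_apply, Finsupp.single_eq_same]; omega
      have hw : w γ = w β * (β i + 1) := by rw [heq, add_comm, w_add_single]
      rw [hw, hγi]
      push_cast; ring
    · rw [if_neg hne, if_neg]
      intro hβ
      apply hne
      rw [← hβ, add_comm]
      exact (sub_single_add γ i h0).symm

lemma B_X_mul (P Q : MvP) (i : Fin 4) :
    B P (X i * Q) = B (pderiv i P) Q := by
  conv_lhs => rw [P.as_sum, Q.as_sum, Finset.mul_sum]
  conv_rhs => rw [P.as_sum, Q.as_sum, map_sum]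
  simp only [B_sum_left, B_sum_right]
  exact Finset.sum_congr rfl fun β _ => Finset.sum_congr rfl fun γ _ => B_mono_X γ β _ _ i

def Rp : MvP := ∑ i, X i ^ 2

lemma B_R_mul (P Q : MvP) :
    B P (Rp * Q) = B (∑ i, pderiv i (pderiv i P)) Q := by
  rw [Rp, Finset.sum_mul, B_sum_right, B_sum_left]
  refine Finset.sum_congr rfl fun i _ => ?_
  rw [sq, mul_assoc, B_X_mul, B_X_mul]

lemma B_R_mul_harmonic (P Q : MvP) (h : IsHarmonic P) : B P (Rp * Q) = 0 := by
  rw [B_R_mul, h, B_zero_left]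


lemma degree_single_one (i : Fin 4) : (Finsupp.single i 1).degree = 1 := by
  simp [Finsupp.degree_apply, Finsupp.support_single_ne_zero i one_ne_zero]

lemma degree_add' (β γ : Fin 4 →₀ ℕ) : (β + γ).degree = β.degree + γ.degree := by
  simp only [Finsupp.degree_eq_weight_one]
  exact map_add _ _ _

lemma mem_support_degree {P : MvP} {n : ℕ} (h : P.IsHomogeneous n) {α : Fin 4 →₀ ℕ}
    (hα : α ∈ P.support) : α.degree = n := by
  rw [Finsupp.degree_eq_weight_one]
  exact h (MvPolynomial.mem_support_iff.mp hα)

lemma prod_sub_single (α : Fin 4 →₀ ℕ) (i : Fin 4) (h : α i ≠ 0) (y : Fin 4 → ℝ) :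
    (α.prod fun j e => y j ^ e) = y i * ((α - Finsupp.single i 1).prod fun j e => y j ^ e) := by
  conv_lhs => rw [← sub_single_add α i h]
  rw [Finsupp.prod_add_index' (fun a => pow_zero (y a)) (fun a b c => pow_add (y a) b c)]
  have hs : ((Finsupp.single i 1).prod fun j e => y j ^ e) = y i := by simp
  rw [hs]; ring

lemma euler_monomial (α : Fin 4 →₀ ℕ) (a : ℝ) (y : Fin 4 → ℝ) :
    ∑ i, y i * eval y (pderiv i (monomial α a)) = (α.degree : ℝ) * eval y (monomial α a) := by
  have key : ∀ i : Fin 4, y i * eval y (pderiv i (monomial α a))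
      = (α i : ℝ) * eval y (monomial α a) := by
    intro i
    rw [pderiv_monomial, eval_monomial, eval_monomial]
    rcases em (α i = 0) with h0 | h0
    · rw [h0]; push_cast; ring
    · rw [prod_sub_single α i h0 y]
      push_cast; ring
  rw [Finset.sum_congr rfl fun i _ => key i, ← Finset.sum_mul]
  congr 1
  rw [Finsupp.degree_apply]
  rw [Finset.sum_subset (Finset.subset_univ α.support)
    (fun i _ hi => by rw [Finsupp.notMem_support_iff.mp hi])]
  norm_num

lemma euler {P : MvP} {n : ℕ} (h : P.IsHomogeneous n) (y : Fin 4 → ℝ) :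
    ∑ i, y i * eval y (pderiv i P) = (n : ℝ) * eval y P := by
  conv_lhs => rw [P.as_sum]
  conv_rhs => rw [P.as_sum]
  simp only [map_sum, Finset.mul_sum]
  rw [Finset.sum_comm]
  refine Finset.sum_congr rfl fun α hα => ?_
  rw [euler_monomial α (coeff α P) y, mem_support_degree h hα]

lemma isHomogeneous_pderiv {P : MvP} {n : ℕ} (h : P.IsHomogeneous (n + 1)) (i : Fin 4) :
    (pderiv i P).IsHomogeneous n := by
  rw [show P = ∑ α ∈ P.support, monomial α (coeff α P) from P.as_sum, map_sum]
  refine IsHomogeneous.sum _ _ _ fun α hα => ?_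
  rw [pderiv_monomial]
  rcases em (α i = 0) with h0 | h0
  · simp only [h0, Nat.cast_zero, mul_zero, map_zero]
    exact isHomogeneous_zero (σ := Fin 4) (R := ℝ) n
  · refine isHomogeneous_monomial _ ?_
    have hdeg := degree_add' (α - Finsupp.single i 1) (Finsupp.single i 1)
    rw [sub_single_add α i h0, degree_single_one] at hdeg
    have hd := mem_support_degree h hα
    omega

lemma B_one (P : MvP) : B P 1 = P.coeff 0 := by
  classical
  rw [B, Finset.sum_eq_single (0 : Fin 4 →₀ ℕ)]
  · rw [w_zero, MvPolynomial.coeff_one, if_pos rfl]; ring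
  · intro α _ hα
    rw [MvPolynomial.coeff_one, if_neg (fun hh => hα hh.symm)]; ring
  · intro h0
    rw [MvPolynomial.notMem_support_iff.mp h0]; ring

lemma eval_hom_zero {P : MvP} (h : P.IsHomogeneous 0) (y : Fin 4 → ℝ) :
    eval y P = P.coeff 0 := by
  conv_lhs => rw [P.as_sum]
  rw [map_sum]
  rcases em ((0 : Fin 4 →₀ ℕ) ∈ P.support) with h0 | h0
  · rw [Finset.sum_eq_single (0 : Fin 4 →₀ ℕ)]
    · simp
    · intro α hα hne
      have := mem_support_degree h hα
      rw [Finsupp.degree_eq_zero_iff] at this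
      exact absurd this hne
    · intro hc; exact absurd h0 hc
  · rw [Finset.sum_eq_zero, (MvPolynomial.notMem_support_iff.mp h0)]
    intro α hα
    have := mem_support_degree h hα
    rw [Finsupp.degree_eq_zero_iff] at this
    subst this
    exact absurd hα h0


def Tp (y : Fin 4 → ℝ) : MvP := ∑ i, C (y i) * X i

lemma B_T_pow (y : Fin 4 → ℝ) : ∀ (k : ℕ) (P : MvP), P.IsHomogeneous k →
    B P (Tp y ^ k) = (k.factorial : ℝ) * eval y P := by
  intro k
  induction k with
  | zero =>
    intro P h
    rw [pow_zero, B_one, eval_hom_zero h]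
    simp
  | succ k ih =>
    intro P h
    have expand : ∀ W : MvP, Tp y * W = ∑ i, C (y i) * X i * W := by
      intro W; rw [Tp, Finset.sum_mul]
    rw [pow_succ', expand, B_sum_right]
    have key : ∀ i : Fin 4, B P (C (y i) * X i * Tp y ^ k)
        = y i * ((k.factorial : ℝ) * eval y (pderiv i P)) := by
      intro i
      rw [mul_assoc, B_C_mul_right, B_X_mul, ih (pderiv i P) (isHomogeneous_pderiv h i)]
    rw [Finset.sum_congr rfl fun i _ => key i]
    have : ∑ i, y i * ((k.factorial : ℝ) * eval y (pderiv i P))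
        = (k.factorial : ℝ) * ∑ i, y i * eval y (pderiv i P) := by
      rw [Finset.mul_sum]; exact Finset.sum_congr rfl fun i _ => by ring
    rw [this, euler h y, Nat.factorial_succ]
    push_cast; ring

lemma isHomogeneous_Tp (y : Fin 4 → ℝ) : (Tp y).IsHomogeneous 1 :=
  IsHomogeneous.sum _ _ _ fun i _ => isHomogeneous_C_mul_X (y i) i

lemma isHomogeneous_Rp : (Rp : MvP).IsHomogeneous 2 :=
  IsHomogeneous.sum _ _ _ fun i _ => isHomogeneous_X_pow i 2

lemma isHomogeneous_TR (y : Fin 4 → ℝ) (c : ℝ) (p m n : ℕ) (hn : p + 2 * m = n) :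
    (C c * Tp y ^ p * Rp ^ m).IsHomogeneous n := by
  have h1 : (C c * Tp y ^ p : MvP).IsHomogeneous (0 + 1 * p) :=
    (isHomogeneous_C (Fin 4) c).mul ((isHomogeneous_Tp y).pow p)
  have h2 : (Rp ^ m : MvP).IsHomogeneous (2 * m) := isHomogeneous_Rp.pow m
  have := h1.mul h2
  convert this using 2
  omega

/-- The zonal harmonic polynomials of degrees 2, 4, 10 (with parameter y on the sphere). -/
def Q2 (y : Fin 4 → ℝ) : MvP := C 4 * Tp y ^ 2 * Rp ^ 0 - C 1 * Tp y ^ 0 * Rp ^ 1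

def Q4 (y : Fin 4 → ℝ) : MvP :=
  C 16 * Tp y ^ 4 * Rp ^ 0 - C 12 * Tp y ^ 2 * Rp ^ 1 + C 1 * Tp y ^ 0 * Rp ^ 2

def Q10 (y : Fin 4 → ℝ) : MvP :=
  C 1024 * Tp y ^ 10 * Rp ^ 0 - C 2304 * Tp y ^ 8 * Rp ^ 1 + C 1792 * Tp y ^ 6 * Rp ^ 2
    - C 560 * Tp y ^ 4 * Rp ^ 3 + C 60 * Tp y ^ 2 * Rp ^ 4 - C 1 * Tp y ^ 0 * Rp ^ 5

lemma isHomogeneous_Q2 (y : Fin 4 → ℝ) : (Q2 y).IsHomogeneous 2 :=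
  (isHomogeneous_TR y 4 2 0 2 rfl).sub (isHomogeneous_TR y 1 0 1 2 rfl)

lemma isHomogeneous_Q4 (y : Fin 4 → ℝ) : (Q4 y).IsHomogeneous 4 :=
  ((isHomogeneous_TR y 16 4 0 4 rfl).sub (isHomogeneous_TR y 12 2 1 4 rfl)).add
    (isHomogeneous_TR y 1 0 2 4 rfl)

lemma isHomogeneous_Q10 (y : Fin 4 → ℝ) : (Q10 y).IsHomogeneous 10 :=
  (((((isHomogeneous_TR y 1024 10 0 10 rfl).sub (isHomogeneous_TR y 2304 8 1 10 rfl)).add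
    (isHomogeneous_TR y 1792 6 2 10 rfl)).sub (isHomogeneous_TR y 560 4 3 10 rfl)).add
    (isHomogeneous_TR y 60 2 4 10 rfl)).sub (isHomogeneous_TR y 1 0 5 10 rfl)


lemma pd_T (y : Fin 4 → ℝ) (i : Fin 4) : pderiv i (Tp y) = C (y i) := by
  classical
  rw [Tp, map_sum]
  rw [Finset.sum_eq_single i]
  · rw [pderiv_C_mul, pderiv_X_self, mul_one]
  · intro j _ hj
    rw [pderiv_C_mul, pderiv_X_of_ne hj, mul_zero]
  · intro h; exact absurd (Finset.mem_univ i) h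

lemma pd_R (i : Fin 4) : pderiv i Rp = C 2 * X i := by
  classical
  rw [Rp, map_sum]
  rw [Finset.sum_eq_single i]
  · rw [pderiv_pow, pderiv_X_self]
    rw [pow_one, map_ofNat]
    push_cast
    ring
  · intro j _ hj
    rw [pderiv_pow, pderiv_X_of_ne hj, mul_zero]
  · intro h; exact absurd (Finset.mem_univ i) h

lemma sum_combine {y : Fin 4 → ℝ} (hy : ∑ i, y i ^ 2 = 1) (u v w z : MvP) :
    ∑ i, (u * (C (y i) * C (y i)) + (v * (C (y i) * X i) + (w * (X i * X i) + z)))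
      = u + (v * Tp y + (w * Rp + C 4 * z)) := by
  rw [Finset.sum_add_distrib, Finset.sum_add_distrib, Finset.sum_add_distrib]
  have h1 : ∑ i, (C (y i) * C (y i) : MvP) = 1 := by
    have : ∀ i : Fin 4, (C (y i) * C (y i) : MvP) = C (y i ^ 2) := by
      intro i; rw [sq, map_mul]
    rw [Finset.sum_congr rfl fun i _ => this i, ← map_sum, hy, map_one]
  have h2 : ∑ i, (X i * X i : MvP) = Rp := by
    rw [Rp]; exact Finset.sum_congr rfl fun i _ => (sq (X i)).symm
  have h3 : ∑ i : Fin 4, z = C 4 * z := by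
    rw [Finset.sum_const, map_ofNat]
    simp
  rw [← Finset.mul_sum, h1, mul_one, ← Finset.mul_sum, ← Finset.mul_sum, h2, h3, Tp]


lemma sum_combine0 (w z : MvP) :
    ∑ i : Fin 4, (w * (X i * X i) + z) = w * Rp + C 4 * z := by
  rw [Finset.sum_add_distrib, ← Finset.mul_sum]
  have h2 : ∑ i, (X i * X i : MvP) = Rp := by
    rw [Rp]; exact Finset.sum_congr rfl fun i _ => (sq (X i)).symm
  have h3 : ∑ i : Fin 4, z = C 4 * z := by
    rw [Finset.sum_const, map_ofNat]
    simp
  rw [h2, h3]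

lemma pd_T_pow (y : Fin 4 → ℝ) (i : Fin 4) (a : ℕ) :
    pderiv i (Tp y ^ (a + 1)) = C ((a : ℝ) + 1) * Tp y ^ a * C (y i) := by
  rw [pderiv_pow, pd_T]
  have he : a + 1 - 1 = a := by omega
  rw [he, ← map_natCast (C : ℝ →+* MvP) (a + 1)]
  push_cast
  ring

lemma pd_R_pow (i : Fin 4) (b : ℕ) :
    pderiv i (Rp ^ (b + 1)) = C ((b : ℝ) + 1) * Rp ^ b * (C 2 * X i) := by
  rw [pderiv_pow, pd_R]
  have he : b + 1 - 1 = b := by omega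
  rw [he, ← map_natCast (C : ℝ →+* MvP) (b + 1)]
  push_cast
  ring

lemma lap_T {y : Fin 4 → ℝ} (hy : ∑ i, y i ^ 2 = 1) (p : ℕ) :
    ∑ i, pderiv i (pderiv i (Tp y ^ (p + 2)))
      = C (((p : ℝ) + 2) * ((p : ℝ) + 1)) * Tp y ^ p := by
  have e1 : ∀ i : Fin 4, pderiv i (pderiv i (Tp y ^ (p + 2)))
      = (C (((p : ℝ) + 2) * ((p : ℝ) + 1)) * Tp y ^ p) * (C (y i) * C (y i))
        + ((0 : MvP) * (C (y i) * X i) + ((0 : MvP) * (X i * X i) + 0)) := by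
    intro i
    have h2 : p + 2 = (p + 1) + 1 := by omega
    rw [h2, pd_T_pow y i (p + 1), pderiv_mul, pderiv_mul, pd_T_pow y i p, pderiv_C, pderiv_C]
    push_cast
    simp only [map_mul, map_add, map_ofNat, map_one]
    ring
  rw [Finset.sum_congr rfl fun i _ => e1 i, sum_combine hy]
  ring

lemma lap_R1 : ∑ i, pderiv i (pderiv i (Rp : MvP)) = C 8 := by
  have e1 : ∀ i : Fin 4, pderiv i (pderiv i (Rp : MvP))
      = (0 : MvP) * (X i * X i) + C 2 := by
    intro i
    rw [pd_R, pderiv_C_mul, pderiv_X_self]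
    ring
  rw [Finset.sum_congr rfl fun i _ => e1 i, sum_combine0]
  simp only [map_ofNat]
  ring

lemma lap_R2 (m : ℕ) :
    ∑ i, pderiv i (pderiv i (Rp ^ (m + 2) : MvP))
      = C (4 * ((m : ℝ) + 2) * ((m : ℝ) + 3)) * Rp ^ (m + 1) := by
  have e1 : ∀ i : Fin 4, pderiv i (pderiv i (Rp ^ (m + 2) : MvP))
      = (C (4 * ((m : ℝ) + 2) * ((m : ℝ) + 1)) * Rp ^ m) * (X i * X i)
          + C (2 * ((m : ℝ) + 2)) * Rp ^ (m + 1) := by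
    intro i
    have h2 : m + 2 = (m + 1) + 1 := by omega
    simp only [h2, pderiv_mul, map_add, pd_R_pow, pd_R, pderiv_C, pderiv_C_mul,
      pderiv_X_self, mul_zero, zero_mul, add_zero, zero_add]
    push_cast
    simp only [map_mul, map_add, map_ofNat, map_one]
    ring
  rw [Finset.sum_congr rfl fun i _ => e1 i, sum_combine0]
  simp only [map_mul, map_add, map_ofNat, map_one]
  ring

lemma lap_TR1 {y : Fin 4 → ℝ} (hy : ∑ i, y i ^ 2 = 1) (p : ℕ) :
    ∑ i, pderiv i (pderiv i (Tp y ^ (p + 2) * Rp))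
      = C (((p : ℝ) + 2) * ((p : ℝ) + 1)) * Tp y ^ p * Rp
        + C (4 * ((p : ℝ) + 4)) * Tp y ^ (p + 2) := by
  have e1 : ∀ i : Fin 4, pderiv i (pderiv i (Tp y ^ (p + 2) * Rp))
      = (C (((p : ℝ) + 2) * ((p : ℝ) + 1)) * Tp y ^ p * Rp) * (C (y i) * C (y i))
        + ((C (4 * ((p : ℝ) + 2)) * Tp y ^ (p + 1)) * (C (y i) * X i)
          + ((0 : MvP) * (X i * X i) + C 2 * Tp y ^ (p + 2))) := by
    intro i
    have h2 : p + 2 = (p + 1) + 1 := by omega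
    simp only [h2, pderiv_mul, map_add, pd_T_pow, pd_R, pderiv_C, pderiv_C_mul,
      pderiv_X_self, mul_zero, zero_mul, add_zero, zero_add]
    push_cast
    simp only [map_mul, map_add, map_ofNat, map_one]
    ring
  rw [Finset.sum_congr rfl fun i _ => e1 i, sum_combine hy]
  simp only [map_mul, map_add, map_ofNat, map_one]
  ring

lemma lap_TR2 {y : Fin 4 → ℝ} (hy : ∑ i, y i ^ 2 = 1) (p m : ℕ) :
    ∑ i, pderiv i (pderiv i (Tp y ^ (p + 2) * Rp ^ (m + 2)))
      = C (((p : ℝ) + 2) * ((p : ℝ) + 1)) * Tp y ^ p * Rp ^ (m + 2)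
        + C (4 * ((m : ℝ) + 2) * ((p : ℝ) + (m : ℝ) + 5)) * Tp y ^ (p + 2) * Rp ^ (m + 1) := by
  have e1 : ∀ i : Fin 4, pderiv i (pderiv i (Tp y ^ (p + 2) * Rp ^ (m + 2)))
      = (C (((p : ℝ) + 2) * ((p : ℝ) + 1)) * Tp y ^ p * Rp ^ (m + 2)) * (C (y i) * C (y i))
        + ((C (4 * ((p : ℝ) + 2) * ((m : ℝ) + 2)) * Tp y ^ (p + 1) * Rp ^ (m + 1))
            * (C (y i) * X i)
          + ((C (4 * ((m : ℝ) + 2) * ((m : ℝ) + 1)) * Tp y ^ (p + 2) * Rp ^ m) * (X i * X i)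
            + C (2 * ((m : ℝ) + 2)) * Tp y ^ (p + 2) * Rp ^ (m + 1))) := by
    intro i
    have h2 : p + 2 = (p + 1) + 1 := by omega
    have h3 : m + 2 = (m + 1) + 1 := by omega
    simp only [h2, h3, pderiv_mul, map_add, pd_T_pow, pd_R_pow, pd_R, pderiv_C, pderiv_C_mul,
      pderiv_X_self, mul_zero, zero_mul, add_zero, zero_add]
    push_cast
    simp only [map_mul, map_add, map_ofNat, map_one]
    ring
  rw [Finset.sum_congr rfl fun i _ => e1 i, sum_combine hy]
  simp only [map_mul, map_add, map_ofNat, map_one]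
  ring


lemma lap_sub (F G : MvP) : ∑ i, pderiv i (pderiv i (F - G))
    = ∑ i, pderiv i (pderiv i F) - ∑ i, pderiv i (pderiv i G) := by
  simp [map_sub, Finset.sum_sub_distrib]

lemma lap_add (F G : MvP) : ∑ i, pderiv i (pderiv i (F + G))
    = ∑ i, pderiv i (pderiv i F) + ∑ i, pderiv i (pderiv i G) := by
  simp [map_add, Finset.sum_add_distrib]

lemma lap_C_mul (c : ℝ) (F : MvP) : ∑ i, pderiv i (pderiv i (C c * F))
    = C c * ∑ i, pderiv i (pderiv i F) := by
  simp [pderiv_C_mul, Finset.mul_sum]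

lemma harmonic_Q2 {y : Fin 4 → ℝ} (hy : ∑ i, y i ^ 2 = 1) : IsHarmonic (Q2 y) := by
  show ∑ i, pderiv i (pderiv i (Q2 y)) = 0
  have hQ : Q2 y = C 4 * Tp y ^ (0 + 2) - C 1 * Rp := by rw [Q2]; ring
  rw [hQ, lap_sub, lap_C_mul, lap_C_mul, lap_T hy 0, lap_R1]
  push_cast
  simp only [map_mul, map_add, map_ofNat, map_one, map_zero]
  ring

lemma harmonic_Q4 {y : Fin 4 → ℝ} (hy : ∑ i, y i ^ 2 = 1) : IsHarmonic (Q4 y) := by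
  show ∑ i, pderiv i (pderiv i (Q4 y)) = 0
  have hQ : Q4 y = C 16 * Tp y ^ (2 + 2) - C 12 * (Tp y ^ (0 + 2) * Rp)
      + C 1 * Rp ^ (0 + 2) := by rw [Q4]; ring
  rw [hQ, lap_add, lap_sub, lap_C_mul, lap_C_mul, lap_C_mul,
    lap_T hy 2, lap_TR1 hy 0, lap_R2 0]
  push_cast
  simp only [map_mul, map_add, map_ofNat, map_one, map_zero]
  ring

lemma harmonic_Q10 {y : Fin 4 → ℝ} (hy : ∑ i, y i ^ 2 = 1) : IsHarmonic (Q10 y) := by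
  show ∑ i, pderiv i (pderiv i (Q10 y)) = 0
  have hQ : Q10 y = C 1024 * Tp y ^ (8 + 2) - C 2304 * (Tp y ^ (6 + 2) * Rp)
      + C 1792 * (Tp y ^ (4 + 2) * Rp ^ (0 + 2)) - C 560 * (Tp y ^ (2 + 2) * Rp ^ (1 + 2))
      + C 60 * (Tp y ^ (0 + 2) * Rp ^ (2 + 2)) - C 1 * Rp ^ (3 + 2) := by rw [Q10]; ring
  rw [hQ, lap_sub, lap_add, lap_sub, lap_add, lap_sub,
    lap_C_mul, lap_C_mul, lap_C_mul, lap_C_mul, lap_C_mul, lap_C_mul,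
    lap_T hy 8, lap_TR1 hy 6, lap_TR2 hy 4 0, lap_TR2 hy 2 1, lap_TR2 hy 0 2, lap_R2 3]
  push_cast
  simp only [map_mul, map_add, map_ofNat, map_one, map_zero]
  ring


lemma B_sub_right (P Q₁ Q₂ : MvP) : B P (Q₁ - Q₂) = B P Q₁ - B P Q₂ := by
  rw [B, B, B, ← Finset.sum_sub_distrib]
  exact Finset.sum_congr rfl fun α _ => by rw [coeff_sub]; ring

lemma dotp_comm (x y : Fin 4 → ℝ) : dotp x y = dotp y x := by
  rw [dotp, dotp]; exact Finset.sum_congr rfl fun i _ => mul_comm _ _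

lemma sphere_sum {y : Fin 4 → ℝ} (h : dotp y y = 1) : ∑ i, y i ^ 2 = 1 := by
  rw [← h, dotp]; exact Finset.sum_congr rfl fun i _ => (sq (y i))

def u2 (t : ℝ) : ℝ := 4*t^2 - 1
def u4 (t : ℝ) : ℝ := 16*t^4 - 12*t^2 + 1
def u10 (t : ℝ) : ℝ :=
  1024*t^10 - 2304*t^8 + 1792*t^6 - 560*t^4 + 60*t^2 - 1

lemma eval_Tp (x y : Fin 4 → ℝ) : eval x (Tp y) = dotp x y := by
  rw [Tp, map_sum, dotp]
  exact Finset.sum_congr rfl fun i _ => by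
    rw [map_mul, eval_C, eval_X]; ring

lemma eval_Rp (x : Fin 4 → ℝ) : eval x Rp = dotp x x := by
  rw [Rp, map_sum, dotp]
  exact Finset.sum_congr rfl fun i _ => by
    rw [map_pow, eval_X, sq]

lemma eval_Q2 {x : Fin 4 → ℝ} (hx : dotp x x = 1) (y : Fin 4 → ℝ) :
    eval x (Q2 y) = u2 (dotp x y) := by
  rw [Q2]
  simp only [map_sub, map_add, map_mul, map_pow, eval_C, eval_Tp, eval_Rp, hx, u2]
  ring

lemma eval_Q4 {x : Fin 4 → ℝ} (hx : dotp x x = 1) (y : Fin 4 → ℝ) :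
    eval x (Q4 y) = u4 (dotp x y) := by
  rw [Q4]
  simp only [map_sub, map_add, map_mul, map_pow, eval_C, eval_Tp, eval_Rp, hx, u4]
  ring

lemma eval_Q10 {x : Fin 4 → ℝ} (hx : dotp x x = 1) (y : Fin 4 → ℝ) :
    eval x (Q10 y) = u10 (dotp x y) := by
  rw [Q10]
  simp only [map_sub, map_add, map_mul, map_pow, eval_C, eval_Tp, eval_Rp, hx, u10]
  ring

lemma B_Q2 {P : MvP} (hP : P.IsHomogeneous 2) (hh : IsHarmonic P) (y : Fin 4 → ℝ) :
    B P (Q2 y) = 8 * eval y P := by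
  have hQ : Q2 y = C 4 * Tp y ^ 2 - C 1 * (Rp * 1) := by rw [Q2]; ring
  rw [hQ, B_sub_right, B_C_mul_right, B_C_mul_right, B_R_mul_harmonic _ _ hh,
    B_T_pow y 2 P hP]
  norm_num [Nat.factorial]
  ring

lemma B_Q4 {P : MvP} (hP : P.IsHomogeneous 4) (hh : IsHarmonic P) (y : Fin 4 → ℝ) :
    B P (Q4 y) = 384 * eval y P := by
  have hQ : Q4 y = C 16 * Tp y ^ 4 - C 12 * (Rp * Tp y ^ 2) + C 1 * (Rp * Rp) := by
    rw [Q4]; ring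
  rw [hQ, B_add_right, B_sub_right, B_C_mul_right, B_C_mul_right, B_C_mul_right,
    B_R_mul_harmonic _ _ hh, B_R_mul_harmonic _ _ hh, B_T_pow y 4 P hP]
  norm_num [Nat.factorial]
  ring

lemma B_Q10 {P : MvP} (hP : P.IsHomogeneous 10) (hh : IsHarmonic P) (y : Fin 4 → ℝ) :
    B P (Q10 y) = 3715891200 * eval y P := by
  have hQ : Q10 y = C 1024 * Tp y ^ 10 - C 2304 * (Rp * Tp y ^ 8)
      + C 1792 * (Rp * (Tp y ^ 6 * Rp)) - C 560 * (Rp * (Tp y ^ 4 * Rp ^ 2))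
      + C 60 * (Rp * (Tp y ^ 2 * Rp ^ 3)) - C 1 * (Rp * Rp ^ 4) := by
    rw [Q10]; ring
  rw [hQ, B_sub_right, B_add_right, B_sub_right, B_add_right, B_sub_right,
    B_C_mul_right, B_C_mul_right, B_C_mul_right, B_C_mul_right, B_C_mul_right, B_C_mul_right,
    B_R_mul_harmonic _ _ hh, B_R_mul_harmonic _ _ hh, B_R_mul_harmonic _ _ hh,
    B_R_mul_harmonic _ _ hh, B_R_mul_harmonic _ _ hh, B_T_pow y 10 P hP]
  norm_num [Nat.factorial]
  ring


section Core

variable {Qf : (Fin 4 → ℝ) → MvP} {κ : ℝ} {uf : ℝ → ℝ} {k : ℕ}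
variable {s : Finset (Fin 4 → ℝ)}

lemma core_key (hhom : ∀ y, (Qf y).IsHomogeneous k)
    (hharm : ∀ y, dotp y y = 1 → IsHarmonic (Qf y))
    (hBQ : ∀ P : MvP, P.IsHomogeneous k → IsHarmonic P → ∀ y, B P (Qf y) = κ * eval y P)
    (hev : ∀ x, dotp x x = 1 → ∀ y, eval x (Qf y) = uf (dotp x y))
    (hs : ∀ z ∈ s, dotp z z = 1) :
    B (∑ x ∈ s, Qf x) (∑ x ∈ s, Qf x) = κ * ∑ x ∈ s, ∑ y ∈ s, uf (dotp x y) := by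
  rw [B_sum_left, Finset.mul_sum]
  refine Finset.sum_congr rfl fun x hx => ?_
  rw [B_sum_right, Finset.mul_sum]
  refine Finset.sum_congr rfl fun y hy => ?_
  rw [hBQ (Qf x) (hhom x) (hharm x (hs x hx)) y, hev y (hs y hy) x, dotp_comm y x]

lemma core_pos (hκ : 0 < κ) (hhom : ∀ y, (Qf y).IsHomogeneous k)
    (hharm : ∀ y, dotp y y = 1 → IsHarmonic (Qf y))
    (hBQ : ∀ P : MvP, P.IsHomogeneous k → IsHarmonic P → ∀ y, B P (Qf y) = κ * eval y P)
    (hev : ∀ x, dotp x x = 1 → ∀ y, eval x (Qf y) = uf (dotp x y))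
    (hs : ∀ z ∈ s, dotp z z = 1) :
    0 ≤ ∑ x ∈ s, ∑ y ∈ s, uf (dotp x y) := by
  have h := B_self_nonneg (∑ x ∈ s, Qf x)
  rw [core_key hhom hharm hBQ hev hs] at h
  nlinarith

lemma core_design_of_zero (hκ : 0 < κ) (hhom : ∀ y, (Qf y).IsHomogeneous k)
    (hharm : ∀ y, dotp y y = 1 → IsHarmonic (Qf y))
    (hBQ : ∀ P : MvP, P.IsHomogeneous k → IsHarmonic P → ∀ y, B P (Qf y) = κ * eval y P)
    (hev : ∀ x, dotp x x = 1 → ∀ y, eval x (Qf y) = uf (dotp x y))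
    (hs : ∀ z ∈ s, dotp z z = 1)
    (h0 : ∑ x ∈ s, ∑ y ∈ s, uf (dotp x y) = 0) :
    ∀ P : MvP, P.IsHomogeneous k → IsHarmonic P → ∑ x ∈ s, eval x P = 0 := by
  intro P hP hh
  have hg : (∑ x ∈ s, Qf x) = 0 := by
    apply eq_zero_of_B_self
    rw [core_key hhom hharm hBQ hev hs, h0, mul_zero]
  have h1 : B P (∑ x ∈ s, Qf x) = 0 := by rw [hg, B_zero_right]
  rw [B_sum_right] at h1
  have h2 : ∀ x ∈ s, B P (Qf x) = κ * eval x P := fun x _ => hBQ P hP hh x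
  rw [Finset.sum_congr rfl h2, ← Finset.mul_sum] at h1
  rcases mul_eq_zero.mp h1 with h | h
  · exact absurd h (ne_of_gt hκ)
  · exact h

lemma core_zero_of_design (hhom : ∀ y, (Qf y).IsHomogeneous k)
    (hharm : ∀ y, dotp y y = 1 → IsHarmonic (Qf y))
    (hev : ∀ x, dotp x x = 1 → ∀ y, eval x (Qf y) = uf (dotp x y))
    (hs : ∀ z ∈ s, dotp z z = 1)
    (hd : ∀ P : MvP, P.IsHomogeneous k → IsHarmonic P → ∑ x ∈ s, eval x P = 0) :
    ∑ x ∈ s, ∑ y ∈ s, uf (dotp x y) = 0 := by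
  rw [Finset.sum_comm]
  refine Finset.sum_eq_zero fun x hx => ?_
  have h1 : ∀ y ∈ s, uf (dotp y x) = eval y (Qf x) := fun y hy =>
    (hev y (hs y hy) x).symm
  rw [Finset.sum_congr rfl h1]
  exact hd (Qf x) (hhom x) (hharm x (hs x hx))

end Core

/-- The LP polynomial. -/
def Ffun (t : ℝ) : ℝ := 16 + 30 * u2 t + 15 * u4 t + u10 t

lemma Fval (t : ℝ) : Ffun t = 1024*t^10 - 2304*t^8 + 1792*t^6 - 320*t^4 := by
  rw [Ffun, u2, u4, u10]; ring

lemma Ffactor (t : ℝ) :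
    Ffun t = 1024 * (t^4 * ((t^2 - 1/4) * (t^4 - 2*t^2 + 5/4))) := by
  rw [Fval]; ring

lemma Fneg {t : ℝ} (h1 : -(1/2) ≤ t) (h2 : t ≤ 1/2) : Ffun t ≤ 0 := by
  rw [Ffactor]
  have ha : t^2 - 1/4 ≤ 0 := by nlinarith
  have hb : 0 < t^4 - 2*t^2 + 5/4 := by nlinarith [sq_nonneg (t^2 - 1)]
  have hc : 0 ≤ t^4 := by positivity
  nlinarith [mul_nonpos_of_nonpos_of_nonneg ha hb.le]

lemma Fzero_iff {t : ℝ} (h1 : -(1/2) ≤ t) (h2 : t ≤ 1/2) (h0 : Ffun t = 0) :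
    t = -(1/2) ∨ t = 0 ∨ t = 1/2 := by
  rw [Ffactor] at h0
  have hb : 0 < t^4 - 2*t^2 + 5/4 := by nlinarith [sq_nonneg (t^2 - 1)]
  have : t^4 * (t^2 - 1/4) = 0 := by
    rcases mul_eq_zero.mp h0 with h | h
    · norm_num at h
    · rcases mul_eq_zero.mp h with h | h
      · rw [h]; ring
      · rcases mul_eq_zero.mp h with h | h
        · rw [h]; ring
        · exact absurd h (ne_of_gt hb)
  rcases mul_eq_zero.mp this with h | h
  · right; left
    exact pow_eq_zero_iff (by norm_num) |>.mp h
  · have : (t - 1/2) * (t + 1/2) = 0 := by nlinarith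
    rcases mul_eq_zero.mp this with h | h
    · right; right; linarith
    · left; linarith

lemma Fzero_vals : Ffun (-(1/2)) = 0 ∧ Ffun 0 = 0 ∧ Ffun (1/2) = 0 := by
  refine ⟨?_, ?_, ?_⟩ <;> (rw [Fval]; norm_num)

lemma F_one : Ffun 1 = 192 := by rw [Fval]; norm_num


/-- Packaged instances for the three degrees. -/
lemma inst2 : (∀ y, (Q2 y).IsHomogeneous 2) ∧ (∀ y, dotp y y = 1 → IsHarmonic (Q2 y)) ∧
    (∀ P : MvP, P.IsHomogeneous 2 → IsHarmonic P → ∀ y, B P (Q2 y) = 8 * eval y P) ∧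
    (∀ x, dotp x x = 1 → ∀ y, eval x (Q2 y) = u2 (dotp x y)) :=
  ⟨isHomogeneous_Q2, fun y h => harmonic_Q2 (sphere_sum h),
    fun P hP hh y => B_Q2 hP hh y, fun x hx y => eval_Q2 hx y⟩

lemma inst4 : (∀ y, (Q4 y).IsHomogeneous 4) ∧ (∀ y, dotp y y = 1 → IsHarmonic (Q4 y)) ∧
    (∀ P : MvP, P.IsHomogeneous 4 → IsHarmonic P → ∀ y, B P (Q4 y) = 384 * eval y P) ∧
    (∀ x, dotp x x = 1 → ∀ y, eval x (Q4 y) = u4 (dotp x y)) :=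
  ⟨isHomogeneous_Q4, fun y h => harmonic_Q4 (sphere_sum h),
    fun P hP hh y => B_Q4 hP hh y, fun x hx y => eval_Q4 hx y⟩

lemma inst10 : (∀ y, (Q10 y).IsHomogeneous 10) ∧ (∀ y, dotp y y = 1 → IsHarmonic (Q10 y)) ∧
    (∀ P : MvP, P.IsHomogeneous 10 → IsHarmonic P → ∀ y,
      B P (Q10 y) = 3715891200 * eval y P) ∧
    (∀ x, dotp x x = 1 → ∀ y, eval x (Q10 y) = u10 (dotp x y)) :=
  ⟨isHomogeneous_Q10, fun y h => harmonic_Q10 (sphere_sum h),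
    fun P hP hh y => B_Q10 hP hh y, fun x hx y => eval_Q10 hx y⟩

end SphAux

open SphAux in
theorem stmt_1 (X : Set (Fin 4 → ℝ)) (hfin : X.Finite) (hne : X.Nonempty)
    (hsph : ∀ x ∈ X, dotp x x = 1)
    (hcode : ∀ x ∈ X, ∀ y ∈ X, x ≠ y → dotp x y ∈ Set.Icc (-(1/2) : ℝ) (1/2)) :
    X.ncard ≤ 12 ∧
      (X.ncard = 12 ↔
        IsSphDesign {10, 4, 2} X ∧
          ∀ x ∈ X, ∀ y ∈ X, x ≠ y → dotp x y ∈ ({-1/2, 0, 1/2} : Set ℝ)) := by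
  classical
  set s : Finset (Fin 4 → ℝ) := hfin.toFinset with hs_def
  have hmem : ∀ z, z ∈ s ↔ z ∈ X := fun z => Set.Finite.mem_toFinset hfin
  have hsph' : ∀ z ∈ s, dotp z z = 1 := fun z hz => hsph z ((hmem z).mp hz)
  have hcard : X.ncard = s.card := Set.ncard_eq_toFinset_card X hfin
  have hne' : 1 ≤ s.card := Finset.card_pos.mpr
    (by obtain ⟨x, hx⟩ := hne; exact ⟨x, (hmem x).mpr hx⟩)
  set n : ℝ := (s.card : ℝ) with hn_def
  have hn1 : (1 : ℝ) ≤ n := by rw [hn_def]; exact_mod_cast hne'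
  set S2 := ∑ x ∈ s, ∑ y ∈ s, u2 (dotp x y) with hS2_def
  set S4 := ∑ x ∈ s, ∑ y ∈ s, u4 (dotp x y) with hS4_def
  set S10 := ∑ x ∈ s, ∑ y ∈ s, u10 (dotp x y) with hS10_def
  set Dsum := ∑ x ∈ s, ∑ y ∈ s, Ffun (dotp x y) with hD_def
  set Soff := ∑ x ∈ s, ∑ y ∈ s.erase x, Ffun (dotp x y) with hSoff_def
  obtain ⟨hom2, harm2, BQ2, ev2⟩ := inst2
  obtain ⟨hom4, harm4, BQ4, ev4⟩ := inst4
  obtain ⟨hom10, harm10, BQ10, ev10⟩ := inst10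
  have hS2pos : 0 ≤ S2 := core_pos (by norm_num) hom2 harm2 BQ2 ev2 hsph'
  have hS4pos : 0 ≤ S4 := core_pos (by norm_num) hom4 harm4 BQ4 ev4 hsph'
  have hS10pos : 0 ≤ S10 := core_pos (by norm_num) hom10 harm10 BQ10 ev10 hsph'
  -- identity 1 : Dsum = 16 n² + 30 S2 + 15 S4 + S10
  have hD1 : Dsum = 16 * n^2 + (30 * S2 + (15 * S4 + S10)) := by
    have expand : ∀ x : Fin 4 → ℝ, ∑ y ∈ s, Ffun (dotp x y)
        = 16 * n + (30 * ∑ y ∈ s, u2 (dotp x y)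
          + (15 * ∑ y ∈ s, u4 (dotp x y) + ∑ y ∈ s, u10 (dotp x y))) := by
      intro x
      rw [Finset.sum_congr rfl (fun y _ =>
        show Ffun (dotp x y) = 16 + (30 * u2 (dotp x y)
          + (15 * u4 (dotp x y) + u10 (dotp x y))) from by rw [Ffun]; ring)]
      rw [Finset.sum_add_distrib, Finset.sum_add_distrib, Finset.sum_add_distrib,
        Finset.sum_const, ← Finset.mul_sum, ← Finset.mul_sum, nsmul_eq_mul]
      ring
    rw [hD_def, Finset.sum_congr rfl (fun x _ => expand x),
      Finset.sum_add_distrib, Finset.sum_add_distrib, Finset.sum_add_distrib,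
      Finset.sum_const, ← Finset.mul_sum, ← Finset.mul_sum, nsmul_eq_mul,
      hS2_def, hS4_def, hS10_def]
    ring
  -- identity 2 : Dsum = 192 n + Soff
  have hD2 : Dsum = 192 * n + Soff := by
    have expand : ∀ x ∈ s, ∑ y ∈ s, Ffun (dotp x y)
        = 192 + ∑ y ∈ s.erase x, Ffun (dotp x y) := by
      intro x hx
      rw [← Finset.add_sum_erase s _ hx, hsph' x hx, F_one]
    rw [hD_def, Finset.sum_congr rfl expand, Finset.sum_add_distrib, Finset.sum_const,
      nsmul_eq_mul, hSoff_def]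
    ring
  -- off-diagonal terms are ≤ 0
  have hterm_le : ∀ x ∈ s, ∀ y ∈ s.erase x, Ffun (dotp x y) ≤ 0 := by
    intro x hx y hy
    have hyne : y ≠ x := Finset.ne_of_mem_erase hy
    have hys : y ∈ s := Finset.mem_of_mem_erase hy
    have hI := hcode x ((hmem x).mp hx) y ((hmem y).mp hys) (fun h => hyne h.symm)
    exact Fneg hI.1 hI.2
  have hoffle : Soff ≤ 0 := by
    rw [hSoff_def]
    exact Finset.sum_nonpos fun x hx => Finset.sum_nonpos fun y hy => hterm_le x hx y hy
  -- main bound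
  have hmain : 16 * n^2 ≤ 192 * n := by nlinarith
  have hbound : s.card ≤ 12 := by
    by_contra hlt
    push_neg at hlt
    have : (13 : ℝ) ≤ n := by rw [hn_def]; exact_mod_cast hlt
    nlinarith
  refine ⟨by rw [hcard]; exact hbound, ?_, ?_⟩
  · -- forward: card = 12 → design ∧ angles
    intro h12
    have hn12 : n = 12 := by rw [hn_def]; exact_mod_cast hcard ▸ h12
    have hkey : 30 * S2 + (15 * S4 + S10) = Soff := by
      rw [hn12] at hD1 hD2; linarith [hD1, hD2]
    have hzero : 30 * S2 + (15 * S4 + S10) = 0 ∧ Soff = 0 := by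
      constructor <;> linarith
    have hS2z : S2 = 0 := by linarith [hzero.1]
    have hS4z : S4 = 0 := by linarith [hzero.1]
    have hS10z : S10 = 0 := by linarith [hzero.1]
    have hSoffz : Soff = 0 := hzero.2
    constructor
    · -- design
      intro ℓ hℓ P hP hh
      rw [finsum_mem_eq_finite_toFinset_sum _ hfin]
      simp only [Set.mem_insert_iff, Set.mem_singleton_iff] at hℓ
      rcases hℓ with rfl | rfl | rfl
      · exact core_design_of_zero (by norm_num) hom10 harm10 BQ10 ev10 hsph' hS10z P hP hh
      · exact core_design_of_zero (by norm_num) hom4 harm4 BQ4 ev4 hsph' hS4z P hP hh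
      · exact core_design_of_zero (by norm_num) hom2 harm2 BQ2 ev2 hsph' hS2z P hP hh
    · -- angles
      intro x hxX y hyX hne2
      have hx : x ∈ s := (hmem x).mpr hxX
      have hy : y ∈ s.erase x := Finset.mem_erase.mpr ⟨fun h => hne2 h.symm, (hmem y).mpr hyX⟩
      have hinner_z : ∀ x' ∈ s, ∑ y' ∈ s.erase x', Ffun (dotp x' y') = 0 := by
        have := (Finset.sum_eq_zero_iff_of_nonpos
          (fun x' hx' => Finset.sum_nonpos fun y' hy' => hterm_le x' hx' y' hy')).mp hSoffz
        exact this
      have hFz : Ffun (dotp x y) = 0 := by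
        have := (Finset.sum_eq_zero_iff_of_nonpos
          (fun y' hy' => hterm_le x hx y' hy')).mp (hinner_z x hx)
        exact this y hy
      have hI := hcode x hxX y hyX hne2
      rcases Fzero_iff hI.1 hI.2 hFz with h | h | h
      · left; rw [h]; norm_num
      · right; left; exact h
      · right; right; rw [h]; norm_num
  · -- backward: design ∧ angles → card = 12
    rintro ⟨hdesign, hangle⟩
    have hd : ∀ k0 ∈ ({10, 4, 2} : Set ℕ), ∀ P : MvP, P.IsHomogeneous k0 → IsHarmonic P →
        ∑ x ∈ s, eval x P = 0 := by
      intro k0 hk0 P hP hh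
      have := hdesign k0 hk0 P hP hh
      rwa [finsum_mem_eq_finite_toFinset_sum _ hfin] at this
    have hS2z : S2 = 0 := core_zero_of_design hom2 harm2 ev2 hsph'
      (hd 2 (by simp) )
    have hS4z : S4 = 0 := core_zero_of_design hom4 harm4 ev4 hsph'
      (hd 4 (by simp))
    have hS10z : S10 = 0 := core_zero_of_design hom10 harm10 ev10 hsph'
      (hd 10 (by simp))
    have hSoffz : Soff = 0 := by
      rw [hSoff_def]
      refine Finset.sum_eq_zero fun x hx => Finset.sum_eq_zero fun y hy => ?_
      have hyne : y ≠ x := Finset.ne_of_mem_erase hy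
      have hys : y ∈ s := Finset.mem_of_mem_erase hy
      have hv := hangle x ((hmem x).mp hx) y ((hmem y).mp hys) (fun h => hyne h.symm)
      obtain ⟨hz1, hz2, hz3⟩ := Fzero_vals
      rcases hv with h | h | h
      · rw [h]; rw [show (-1/2 : ℝ) = -(1/2) by norm_num]; exact hz1
      · rw [h]; exact hz2
      · rw [h]; rw [show (1/2 : ℝ) = 1/2 by norm_num]; exact hz3
    have heq : 16 * n^2 = 192 * n := by
      rw [hS2z, hS4z, hS10z] at hD1
      rw [hSoffz] at hD2
      rw [hD2] at hD1
      linarith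
    have hn12 : n = 12 := by
      have hfac : 16 * n * (n - 12) = 0 := by ring_nf; ring_nf at heq; linarith
      rcases mul_eq_zero.mp hfac with h | h
      · rcases mul_eq_zero.mp h with h | h
        · norm_num at h
        · nlinarith
      · linarith
    rw [hcard]
    rw [hn_def] at hn12
    exact_mod_cast hn12
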